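/- q-Gauss summation: for complex q with 0<|q|<1 and generic a, b, c with |c/(ab)| < 1, ∑_{k≥0} (a;q)_k (b;q)_k / ((c;q)_k (q;q)_k) (c/(ab))^k = (c/a;q)_∞ (c/b;q)_∞ / ((c;q)_∞ (c/(ab);q)_∞). -/

import Mathlib

noncomputable def qp (q x : ℂ) (k : ℕ) : ℂ := ∏ j ∈ Finset.range k, (1 - x * q ^ j)

noncomputable def qpi (q x : ℂ) : ℂ := ∏' j : ℕ, (1 - x * q ^ j)

lemma qp_zero (q x : ℂ) : qp q x 0 = 1 := by simp [qp]

lemma qp_succ (q x : ℂ) (k : ℕ) : qp q x (k + 1) = qp q x k * (1 - x * q ^ k) :=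
  Finset.prod_range_succ _ _

lemma qp_mul_q (q x : ℂ) (k : ℕ) : (1 - x) * qp q (x * q) k = qp q x (k + 1) := by
  induction k with
  | zero => simp [qp]
  | succ n ih =>
    rw [qp_succ, ← mul_assoc, ih, qp_succ q x (n+1), qp_succ q x n, pow_succ]
    ring

lemma qp_add (q x : ℂ) (m n : ℕ) : qp q x (m + n) = qp q x m * qp q (x * q ^ m) n := by
  induction n with
  | zero => simp [qp]
  | succ n ih =>
    rw [← Nat.add_assoc, qp_succ, ih, qp_succ, mul_assoc]
    congr 2
    rw [pow_add]
    ring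

lemma geomle (r : ℝ) (h0 : 0 ≤ r) (h1 : r < 1) (n : ℕ) :
    ∑ i ∈ Finset.range n, r ^ i ≤ (1 - r)⁻¹ := by
  have h2 : (0:ℝ) < 1 - r := by linarith
  have h3 : ∑ i ∈ Finset.range n, r ^ i = (1 - r ^ n) / (1 - r) := by
    rw [geom_sum_eq h1.ne]
    rw [div_eq_div_iff (by intro h; apply h1.ne; linarith [sub_eq_zero.mp h]) h2.ne']
    ring
  rw [h3, inv_eq_one_div]
  gcongr
  have := pow_nonneg h0 n; linarith

lemma exp_le_one_sub (u v : ℝ) (hu : 0 ≤ u) (huv : u ≤ v) (hv : v < 1) :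
    Real.exp (-(u / (1 - v))) ≤ 1 - u := by
  have h2 : (0:ℝ) < 1 - v := by linarith
  set w := u / (1 - v) with hw
  have hw0 : 0 ≤ w := div_nonneg hu h2.le
  have h1 : 1 + w ≤ Real.exp w := by linarith [Real.add_one_le_exp w]
  have hkey : 1 ≤ (1 - u) * (1 + w) := by
    have : w * (1 - v) = u := by rw [hw]; exact div_mul_cancel₀ u h2.ne'
    nlinarith
  rw [Real.exp_neg]
  have hepos : (0:ℝ) < Real.exp w := Real.exp_pos w
  rw [inv_le_iff_one_le_mul₀ hepos]
  nlinarith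

open Finset in
lemma qp_norm_le (q x : ℂ) (hq1 : ‖q‖ < 1) (k : ℕ) :
    ‖qp q x k‖ ≤ Real.exp (‖x‖ / (1 - ‖q‖)) := by
  have hq0 : (0:ℝ) ≤ ‖q‖ := norm_nonneg q
  rw [qp, norm_prod]
  calc ∏ j ∈ range k, ‖1 - x * q ^ j‖
      ≤ ∏ j ∈ range k, Real.exp (‖x‖ * ‖q‖ ^ j) := by
        apply Finset.prod_le_prod (fun j _ => norm_nonneg _)
        intro j _
        calc ‖1 - x * q ^ j‖ ≤ ‖(1:ℂ)‖ + ‖x * q ^ j‖ := norm_sub_le _ _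
          _ = 1 + ‖x‖ * ‖q‖ ^ j := by rw [norm_one, norm_mul, norm_pow]
          _ ≤ Real.exp (‖x‖ * ‖q‖ ^ j) := by
              linarith [Real.add_one_le_exp (‖x‖ * ‖q‖ ^ j)]
    _ = Real.exp (∑ j ∈ range k, ‖x‖ * ‖q‖ ^ j) := (Real.exp_sum _ _).symm
    _ ≤ Real.exp (‖x‖ / (1 - ‖q‖)) := by
        apply Real.exp_le_exp.mpr
        rw [← Finset.mul_sum, div_eq_mul_inv]
        exact mul_le_mul_of_nonneg_left (geomle _ hq0 hq1 k) (norm_nonneg x)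

open Finset in
lemma qp_norm_ge (q x : ℂ) (hq1 : ‖q‖ < 1) (hx : ‖x‖ < 1) (k : ℕ) :
    Real.exp (-(‖x‖ / ((1 - ‖x‖) * (1 - ‖q‖)))) ≤ ‖qp q x k‖ := by
  have hq0 : (0:ℝ) ≤ ‖q‖ := norm_nonneg q
  have hx0 : (0:ℝ) ≤ ‖x‖ := norm_nonneg x
  have hx2 : (0:ℝ) < 1 - ‖x‖ := by linarith
  rw [qp, norm_prod]
  calc Real.exp (-(‖x‖ / ((1 - ‖x‖) * (1 - ‖q‖))))
      ≤ Real.exp (∑ j ∈ range k, -(‖x‖ * ‖q‖ ^ j / (1 - ‖x‖))) := by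
        apply Real.exp_le_exp.mpr
        rw [show ∑ j ∈ range k, -(‖x‖ * ‖q‖ ^ j / (1 - ‖x‖))
            = -∑ j ∈ range k, ‖x‖ * ‖q‖ ^ j / (1 - ‖x‖) by
          rw [Finset.sum_neg_distrib], neg_le_neg_iff]
        calc ∑ j ∈ range k, ‖x‖ * ‖q‖ ^ j / (1 - ‖x‖)
            = (‖x‖ / (1 - ‖x‖)) * ∑ j ∈ range k, ‖q‖ ^ j := by
              rw [Finset.mul_sum]; congr 1; ext j; ring
          _ ≤ (‖x‖ / (1 - ‖x‖)) * (1 - ‖q‖)⁻¹ := by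
              exact mul_le_mul_of_nonneg_left (geomle _ hq0 hq1 k)
                (div_nonneg hx0 hx2.le)
          _ = ‖x‖ / ((1 - ‖x‖) * (1 - ‖q‖)) := by
              field_simp
    _ = ∏ j ∈ range k, Real.exp (-(‖x‖ * ‖q‖ ^ j / (1 - ‖x‖))) := Real.exp_sum _ _
    _ ≤ ∏ j ∈ range k, ‖1 - x * q ^ j‖ := by
        apply Finset.prod_le_prod (fun j _ => (Real.exp_pos _).le)
        intro j _
        have hqj : ‖q‖ ^ j ≤ 1 := pow_le_one₀ hq0 hq1.le
        have h1 : ‖x‖ * ‖q‖ ^ j ≤ ‖x‖ := by nlinarith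
        calc Real.exp (-(‖x‖ * ‖q‖ ^ j / (1 - ‖x‖)))
            ≤ 1 - ‖x‖ * ‖q‖ ^ j :=
              exp_le_one_sub _ _ (by positivity) h1 hx
          _ = 1 - ‖x * q ^ j‖ := by rw [norm_mul, norm_pow]
          _ ≤ ‖1 - x * q ^ j‖ := by
              calc 1 - ‖x * q ^ j‖ = ‖(1:ℂ)‖ - ‖x * q ^ j‖ := by rw [norm_one]
                _ ≤ ‖1 - x * q ^ j‖ := norm_sub_norm_le _ _

lemma qp_norm_ge_half (q y : ℂ) (hq1 : ‖q‖ < 1) (hy : ‖y‖ ≤ 1/2) (m : ℕ) :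
    Real.exp (-(1 / (1 - ‖q‖))) ≤ ‖qp q y m‖ := by
  have hy1 : ‖y‖ < 1 := by linarith
  refine le_trans ?_ (qp_norm_ge q y hq1 hy1 m)
  apply Real.exp_le_exp.mpr
  rw [neg_le_neg_iff]
  have h1 : (0:ℝ) < 1 - ‖y‖ := by linarith
  have h2 : (0:ℝ) < 1 - ‖q‖ := by linarith
  rw [div_le_div_iff₀ (by positivity) (by positivity)]
  have : ‖y‖ * 2 ≤ 1 := by linarith
  nlinarith [norm_nonneg y]

lemma qp_pos_lb (q x : ℂ) (hq1 : ‖q‖ < 1) (hx : ∀ k, qp q x k ≠ 0) :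
    ∃ δ : ℝ, 0 < δ ∧ ∀ k, δ ≤ ‖qp q x k‖ := by
  have hq0 : (0:ℝ) ≤ ‖q‖ := norm_nonneg q
  -- find N with ‖x * q^N‖ ≤ 1/2
  have htend : Filter.Tendsto (fun n : ℕ => ‖x‖ * ‖q‖ ^ n) Filter.atTop (nhds 0) := by
    simpa using (tendsto_pow_atTop_nhds_zero_of_lt_one hq0 hq1).const_mul ‖x‖
  obtain ⟨N, hN⟩ := (htend.eventually (eventually_le_nhds (by norm_num : (0:ℝ) < 1/2))).exists
  have hxN : ‖x * q ^ N‖ ≤ 1/2 := by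
    rw [norm_mul, norm_pow]; exact hN
  have hsmall := fun (y : ℂ) hy m => qp_norm_ge_half q y hq1 hy m
  -- min over small indices
  set m0 : ℝ := (Finset.range (N+1)).inf' (by simp) (fun i => ‖qp q x i‖) with hm0
  have hm0pos : 0 < m0 := by
    rw [hm0, Finset.lt_inf'_iff]
    intro i _
    exact norm_pos_iff.mpr (hx i)
  set δ := m0 * Real.exp (-(1 / (1 - ‖q‖))) with hδ
  refine ⟨δ, by positivity, fun k => ?_⟩
  have hexple1 : Real.exp (-(1 / (1 - ‖q‖))) ≤ 1 := by
    apply Real.exp_le_one_iff.mpr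
    have h : (0:ℝ) < 1 - ‖q‖ := by linarith
    have : (0:ℝ) ≤ 1 / (1 - ‖q‖) := by positivity
    linarith
  rcases le_or_gt k N with hk | hk
  · have : m0 ≤ ‖qp q x k‖ :=
      Finset.inf'_le _ (Finset.mem_range.mpr (Nat.lt_succ_of_le hk))
    nlinarith
  · have hksplit : k = N + (k - N) := by omega
    rw [hksplit, qp_add, norm_mul]
    have h1 : m0 ≤ ‖qp q x N‖ :=
      Finset.inf'_le _ (Finset.mem_range.mpr (Nat.lt_succ_self N))
    have h2 := hsmall (x * q ^ N) hxN (k - N)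
    rw [hδ]
    exact mul_le_mul h1 h2 (Real.exp_pos _).le (norm_nonneg _)

lemma hasProd_zero_of_factor (f : ℕ → ℂ) (j0 : ℕ) (h : f j0 = 0) : HasProd f 0 := by
  rw [HasProd]
  have hev : ∀ᶠ s : Finset ℕ in Filter.atTop, ({j0} : Finset ℕ) ≤ s :=
    Filter.eventually_ge_atTop _
  apply Filter.Tendsto.congr' _ tendsto_const_nhds
  filter_upwards [hev] with s hs
  exact (Finset.prod_eq_zero (hs (Finset.mem_singleton_self j0)) h).symm

lemma hasProd_qpi (q x : ℂ) (hq1 : ‖q‖ < 1) :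
    HasProd (fun j => 1 - x * q ^ j) (qpi q x) := by
  by_cases hz : ∃ j, 1 - x * q ^ j = 0
  · obtain ⟨j0, hj0⟩ := hz
    have h0 := hasProd_zero_of_factor (fun j => 1 - x * q ^ j) j0 hj0
    rw [qpi, h0.tprod_eq]
    exact h0
  · push_neg at hz
    have hq0 : (0:ℝ) ≤ ‖q‖ := norm_nonneg q
    have htend : Filter.Tendsto (fun n : ℕ => ‖x‖ * ‖q‖ ^ n) Filter.atTop (nhds 0) := by
      simpa using (tendsto_pow_atTop_nhds_zero_of_lt_one hq0 hq1).const_mul ‖x‖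
    obtain ⟨N, hN⟩ := (htend.eventually
      (eventually_le_nhds (by norm_num : (0:ℝ) < 1/2))).exists
    have hsum : Summable fun n => Complex.log (1 - x * q ^ n) := by
      rw [← summable_nat_add_iff N]
      apply Summable.of_norm_bounded
        (g := fun n => 3/2 * (‖x‖ * ‖q‖ ^ N) * ‖q‖ ^ n)
        (((summable_geometric_of_lt_one hq0 hq1).mul_left _))
      intro n
      have hb : ‖-(x * q ^ (n + N))‖ ≤ 1/2 := by
        rw [norm_neg, norm_mul, norm_pow, pow_add]
        calc ‖x‖ * (‖q‖ ^ n * ‖q‖ ^ N) ≤ ‖x‖ * (1 * ‖q‖ ^ N) := by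
              have h1 : ‖q‖ ^ n ≤ 1 := pow_le_one₀ hq0 hq1.le
              have h2 := norm_nonneg x
              have h3 := pow_nonneg hq0 N
              nlinarith [mul_le_mul_of_nonneg_right h1 h3]
          _ = ‖x‖ * ‖q‖ ^ N := by ring
          _ ≤ 1/2 := hN
      have := Complex.norm_log_one_add_half_le_self hb
      rw [show (1:ℂ) + -(x * q ^ (n + N)) = 1 - x * q ^ (n + N) by ring] at this
      calc ‖Complex.log (1 - x * q ^ (n + N))‖ ≤ 3/2 * ‖-(x * q ^ (n + N))‖ := this
        _ = 3/2 * (‖x‖ * ‖q‖ ^ N) * ‖q‖ ^ n := by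
            rw [norm_neg, norm_mul, norm_pow, pow_add]; ring
    have hmul : Multipliable fun j => 1 - x * q ^ j := by
      exact Complex.multipliable_of_summable_log hsum
    rw [qpi]
    exact hmul.hasProd

lemma tendsto_qp_qpi (q x : ℂ) (hq1 : ‖q‖ < 1) :
    Filter.Tendsto (fun N => qp q x N) Filter.atTop (nhds (qpi q x)) := by
  simpa [qp] using (hasProd_qpi q x hq1).tendsto_prod_nat

lemma qpi_factor_ne (q x : ℂ) (h : qpi q x ≠ 0) (j : ℕ) : 1 - x * q ^ j ≠ 0 := by
  intro hj
  exact h ((hasProd_zero_of_factor (fun j => 1 - x * q ^ j) j hj).tprod_eq)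

lemma f_norm_bound (q a b c' : ℂ) (hq1 : ‖q‖ < 1) (δc δq : ℝ) (hδc : 0 < δc) (hδq : 0 < δq)
    (hc : ∀ k, δc ≤ ‖qp q c' k‖) (hq : ∀ k, δq ≤ ‖qp q q k‖) (k : ℕ) :
    ‖qp q a k * qp q b k / (qp q c' k * qp q q k) * (c' / (a * b)) ^ k‖
      ≤ (Real.exp (‖a‖ / (1 - ‖q‖)) * Real.exp (‖b‖ / (1 - ‖q‖)) / (δc * δq))
          * ‖c' / (a * b)‖ ^ k := by
  rw [norm_mul, norm_div, norm_mul, norm_mul, norm_pow]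
  apply mul_le_mul _ le_rfl (pow_nonneg (norm_nonneg _) k)
  · positivity
  · apply div_le_div₀ (by positivity)
    · exact mul_le_mul (qp_norm_le q a hq1 k) (qp_norm_le q b hq1 k)
        (norm_nonneg _) (Real.exp_pos _).le
    · positivity
    · exact mul_le_mul (hc k) (hq k) hδq.le (norm_nonneg _)

set_option maxHeartbeats 1000000 in
lemma key_identity (k : ℕ) (q a b c' : ℂ) (ha : a ≠ 0) (hb : b ≠ 0)
    (hCk : qp q c' k ≠ 0) (hQk : qp q q k ≠ 0)
    (hc0 : 1 - c' ≠ 0) (hck : 1 - c' * q ^ k ≠ 0) (hqk : 1 - q * q ^ k ≠ 0) :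
    (1 - c') * (1 - c' / (a * b))
        * (qp q a k * qp q b k / (qp q c' k * qp q q k) * (c' / (a * b)) ^ k)
      - (1 - c' / a) * (1 - c' / b)
        * (qp q a k * qp q b k / (qp q (c' * q) k * qp q q k) * (c' * q / (a * b)) ^ k)
      = (1 - c') * ((1 - q ^ k)
          * (qp q a k * qp q b k / (qp q c' k * qp q q k) * (c' / (a * b)) ^ k)
        - (1 - q ^ (k + 1)) * (qp q a (k + 1) * qp q b (k + 1)
            / (qp q c' (k + 1) * qp q q (k + 1)) * (c' / (a * b)) ^ (k + 1))) := by
  have hCq : qp q (c' * q) k = qp q c' k * (1 - c' * q ^ k) / (1 - c') := by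
    rw [eq_div_iff hc0, mul_comm, qp_mul_q, qp_succ]
  rw [qp_succ q a k, qp_succ q b k, qp_succ q c' k, qp_succ q q k, hCq,
    pow_succ (c' / (a * b)) k, pow_succ q k,
    show c' * q / (a * b) = c' / (a * b) * q from by ring, mul_pow]
  generalize qp q a k = A
  generalize qp q b k = B
  generalize hC : qp q c' k = C at hCk
  generalize hQ : qp q q k = Q at hQk
  generalize hP : (c' / (a * b)) ^ k = P
  generalize hu : (q : ℂ) ^ k = u at hck hqk
  have h1 : A * B / (C * (1 - c' * u) / (1 - c') * Q) * (P * u)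
      = A * B / (C * Q) * P * ((1 - c') * u / (1 - c' * u)) := by
    field_simp
  have h2 : A * (1 - a * u) * (B * (1 - b * u)) / (C * (1 - c' * u) * (Q * (1 - q * u)))
        * (P * (c' / (a * b)))
      = A * B / (C * Q) * P
          * ((1 - a * u) * (1 - b * u) * c' / ((1 - c' * u) * (1 - q * u) * (a * b))) := by
    field_simp
  rw [h1, h2]
  have hs : (1 - c') * (1 - c' / (a * b))
        - (1 - c' / a) * (1 - c' / b) * ((1 - c') * u / (1 - c' * u))
      = (1 - c') * ((1 - u)
        - (1 - u * q) * ((1 - a * u) * (1 - b * u) * c'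
            / ((1 - c' * u) * (1 - q * u) * (a * b)))) := by
    have hqk' : 1 - u * q ≠ 0 := by rwa [mul_comm]
    field_simp
    ring
  linear_combination (A * B / (C * Q) * P) * hs

/-- q-Gauss summation. -/
theorem qGauss (q a b c : ℂ)
    (hq0 : 0 < ‖q‖) (hq1 : ‖q‖ < 1)
    (ha : a ≠ 0) (hb : b ≠ 0)
    (harg : ‖c / (a * b)‖ < 1)
    (hden : ∀ k : ℕ, qp q c k ≠ 0 ∧ qp q q k ≠ 0)
    (hdeninf : qpi q c ≠ 0 ∧ qpi q (c / (a * b)) ≠ 0) :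
    ∑' k : ℕ, qp q a k * qp q b k / (qp q c k * qp q q k) * (c / (a * b)) ^ k
      = qpi q (c / a) * qpi q (c / b) / (qpi q c * qpi q (c / (a * b))) := by
  have hqn : ‖q‖ < 1 := by exact hq1
  have hrn : ‖c / (a * b)‖ < 1 := by exact harg
  have hq0' : (0:ℝ) ≤ ‖q‖ := norm_nonneg q
  set r := ‖c / (a * b)‖ with hr
  have hr0 : (0:ℝ) ≤ r := norm_nonneg _
  set f : ℕ → ℕ → ℂ := fun n k =>
    qp q a k * qp q b k / (qp q (c * q ^ n) k * qp q q k) * (c * q ^ n / (a * b)) ^ k with hf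
  set F : ℕ → ℂ := fun n => ∑' k, f n k with hF
  have hQ : ∀ k, qp q q k ≠ 0 := fun k => (hden k).2
  have hC : ∀ n k, qp q (c * q ^ n) k ≠ 0 := by
    intro n k
    have h := (hden (n + k)).1
    rw [qp_add] at h
    exact fun h0 => h (by rw [h0, mul_zero])
  have hcf : ∀ m : ℕ, 1 - c * q ^ m ≠ 0 := by
    intro m h0
    have h := (hden (m + 1)).1
    rw [qp_succ] at h
    exact h (by rw [h0, mul_zero])
  have hqf : ∀ m : ℕ, 1 - q * q ^ m ≠ 0 := by
    intro m h0
    have h := (hden (m + 1)).2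
    rw [qp_succ] at h
    exact h (by rw [h0, mul_zero])
  have htf : ∀ m : ℕ, 1 - c / (a * b) * q ^ m ≠ 0 := fun m => qpi_factor_ne q _ hdeninf.2 m
  have hcq : ∀ n : ℕ, c * q ^ n / (a * b) = c / (a * b) * q ^ n := fun n => by ring
  have hrn_eq : ∀ n : ℕ, ‖c * q ^ n / (a * b)‖ = r * ‖q‖ ^ n := by
    intro n; rw [hcq, norm_mul, norm_pow]
  have hrn_le : ∀ n : ℕ, ‖c * q ^ n / (a * b)‖ ≤ r := by
    intro n
    rw [hrn_eq]
    have h1 : ‖q‖ ^ n ≤ 1 := pow_le_one₀ hq0' hqn.le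
    nlinarith [pow_nonneg hq0' n]
  have hrn_lt : ∀ n, ‖c * q ^ n / (a * b)‖ < 1 := fun n => lt_of_le_of_lt (hrn_le n) hrn
  -- summability
  have hδq : ∀ k, Real.exp (-(‖q‖ / ((1 - ‖q‖) * (1 - ‖q‖)))) ≤ ‖qp q q k‖ :=
    fun k => qp_norm_ge q q hqn hqn k
  have hfsn : ∀ n, Summable (fun k => ‖f n k‖) := by
    intro n
    obtain ⟨δ, hδpos, hδ⟩ := qp_pos_lb q (c * q ^ n) hqn (hC n)
    apply Summable.of_nonneg_of_le (fun k => norm_nonneg _)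
      (fun k => f_norm_bound q a b (c * q ^ n) hqn δ _ hδpos (Real.exp_pos _) hδ hδq k)
    exact (summable_geometric_of_lt_one (norm_nonneg _) (hrn_lt n)).mul_left _
  have hfs : ∀ n, Summable (f n) := fun n => (hfsn n).of_norm
  -- contiguous relation
  have hstep : ∀ n, ((1 - c * q ^ n) * (1 - c * q ^ n / (a * b))) * F n
      = ((1 - c * q ^ n / a) * (1 - c * q ^ n / b)) * F (n + 1) := by
    intro n
    have hck : ∀ k : ℕ, 1 - c * q ^ n * q ^ k ≠ 0 := by
      intro k
      have := hcf (n + k)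
      rwa [pow_add, ← mul_assoc] at this
    have hkey : ∀ k, ((1 - c * q ^ n) * (1 - c * q ^ n / (a * b))) * f n k
        - ((1 - c * q ^ n / a) * (1 - c * q ^ n / b)) * f (n + 1) k
        = (1 - c * q ^ n) * ((1 - q ^ k) * f n k - (1 - q ^ (k + 1)) * f n (k + 1)) := by
      intro k
      have h := key_identity k q a b (c * q ^ n) ha hb (hC n k) (hQ k)
        (by simpa using hcf n) (hck k) (hqf k)
      have hc1 : c * q ^ (n + 1) = c * q ^ n * q := by rw [pow_succ]; ring
      simp only [hf, hc1]
      exact h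
    set g : ℕ → ℂ := fun k => (1 - q ^ k) * f n k with hg
    have hgs : Summable g := by
      apply Summable.of_norm_bounded (g := fun k => 2 * ‖f n k‖) ((hfsn n).mul_left 2)
      intro k
      rw [hg, norm_mul]
      have h1 : ‖(1:ℂ) - q ^ k‖ ≤ 2 := by
        calc ‖(1:ℂ) - q ^ k‖ ≤ ‖(1:ℂ)‖ + ‖q ^ k‖ := norm_sub_le _ _
          _ ≤ 1 + 1 := by
            rw [norm_one, norm_pow]
            have := pow_le_one₀ hq0' hqn.le (n := k)
            linarith
          _ = 2 := by norm_num
      have := norm_nonneg (f n k)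
      nlinarith
    have hgl : Filter.Tendsto g Filter.atTop (nhds 0) := by
      have h1 : Filter.Tendsto (fun k => f n k) Filter.atTop (nhds 0) :=
        (hfs n).tendsto_atTop_zero
      have h2 : Filter.Tendsto (fun k : ℕ => 1 - q ^ k) Filter.atTop (nhds 1) := by
        simpa using
          Filter.Tendsto.sub (tendsto_const_nhds (x := (1:ℂ)))
            (tendsto_pow_atTop_nhds_zero_of_norm_lt_one hqn)
      simpa using h2.mul h1
    have hgs' : Summable (fun k => g (k + 1)) := (summable_nat_add_iff 1).2 hgs
    have hgsub : Summable (fun k => g k - g (k + 1)) := hgs.sub hgs'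
    have htel : ∑' k, (g k - g (k + 1)) = 0 := by
      have hp := hgsub.hasSum.tendsto_sum_nat
      have heq : (fun N => ∑ k ∈ Finset.range N, (g k - g (k + 1)))
          = fun N => g 0 - g N := funext fun N => Finset.sum_range_sub' g N
      rw [heq] at hp
      have hg0 : g 0 = 0 := by simp [hg]
      have hq2 : Filter.Tendsto (fun N => g 0 - g N) Filter.atTop (nhds 0) := by
        rw [hg0]
        simpa using Filter.Tendsto.sub (tendsto_const_nhds (x := (0:ℂ))) hgl
      exact tendsto_nhds_unique hp hq2
    have hzero : ∑' k, (((1 - c * q ^ n) * (1 - c * q ^ n / (a * b))) * f n k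
        - ((1 - c * q ^ n / a) * (1 - c * q ^ n / b)) * f (n + 1) k) = 0 := by
      calc ∑' k, (((1 - c * q ^ n) * (1 - c * q ^ n / (a * b))) * f n k
            - ((1 - c * q ^ n / a) * (1 - c * q ^ n / b)) * f (n + 1) k)
          = ∑' k, (1 - c * q ^ n) * (g k - g (k + 1)) := by
            apply tsum_congr
            intro k
            rw [hkey k]
        _ = (1 - c * q ^ n) * ∑' k, (g k - g (k + 1)) := tsum_mul_left
        _ = 0 := by rw [htel, mul_zero]
    have hsplit : ∑' k, (((1 - c * q ^ n) * (1 - c * q ^ n / (a * b))) * f n k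
        - ((1 - c * q ^ n / a) * (1 - c * q ^ n / b)) * f (n + 1) k)
        = ((1 - c * q ^ n) * (1 - c * q ^ n / (a * b))) * F n
          - ((1 - c * q ^ n / a) * (1 - c * q ^ n / b)) * F (n + 1) := by
      rw [Summable.tsum_sub ((hfs n).mul_left _) ((hfs (n + 1)).mul_left _),
        tsum_mul_left, tsum_mul_left]
    rw [hsplit] at hzero
    linear_combination hzero
  have hstep' : ∀ n, F n = ((1 - c * q ^ n / a) * (1 - c * q ^ n / b)
      / ((1 - c * q ^ n) * (1 - c * q ^ n / (a * b)))) * F (n + 1) := by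
    intro n
    have hX : (1 - c * q ^ n) * (1 - c * q ^ n / (a * b)) ≠ 0 := by
      apply mul_ne_zero (hcf n)
      rw [hcq n]
      exact htf n
    rw [div_mul_eq_mul_div, eq_div_iff hX]
    linear_combination hstep n
  set R : ℕ → ℂ := fun i => (1 - c * q ^ i / a) * (1 - c * q ^ i / b)
      / ((1 - c * q ^ i) * (1 - c * q ^ i / (a * b))) with hR
  have hiter : ∀ N, F 0 = (∏ i ∈ Finset.range N, R i) * F N := by
    intro N
    induction N with
    | zero => simp
    | succ N ih =>
      rw [Finset.prod_range_succ, ih, hstep' N, hR]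
      ring
  have hprod : ∀ N, ∏ i ∈ Finset.range N, R i
      = qp q (c / a) N * qp q (c / b) N / (qp q c N * qp q (c / (a * b)) N) := by
    intro N
    rw [qp, qp, qp, qp, ← Finset.prod_mul_distrib, ← Finset.prod_mul_distrib,
      ← Finset.prod_div_distrib]
    apply Finset.prod_congr rfl
    intro i _
    simp only [hR]
    rw [show c * q ^ i / a = c / a * q ^ i from by ring,
      show c * q ^ i / b = c / b * q ^ i from by ring,
      show c * q ^ i / (a * b) = c / (a * b) * q ^ i from by ring]
  -- limit of F
  have hFlim : Filter.Tendsto F Filter.atTop (nhds 1) := by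
    have htend : Filter.Tendsto (fun n : ℕ => ‖c‖ * ‖q‖ ^ n) Filter.atTop (nhds 0) := by
      simpa using (tendsto_pow_atTop_nhds_zero_of_lt_one hq0' hqn).const_mul ‖c‖
    obtain ⟨N0, hN0⟩ := Filter.eventually_atTop.mp
      (htend.eventually (eventually_le_nhds (by norm_num : (0:ℝ) < 1/2)))
    set δc := Real.exp (-(1 / (1 - ‖q‖))) with hδc
    set δq' := Real.exp (-(‖q‖ / ((1 - ‖q‖) * (1 - ‖q‖)))) with hδq'
    set K := Real.exp (‖a‖ / (1 - ‖q‖)) * Real.exp (‖b‖ / (1 - ‖q‖)) / (δc * δq') with hK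
    have hKpos : (0:ℝ) < K := by rw [hK, hδc, hδq']; positivity
    have hbound : ∀ n ≥ N0, ‖F n - 1‖ ≤ K * r * (1 - r)⁻¹ * ‖q‖ ^ n := by
      intro n hn
      have hcn : ‖c * q ^ n‖ ≤ 1/2 := by
        rw [norm_mul, norm_pow]
        exact hN0 n hn
      have hlow : ∀ k, δc ≤ ‖qp q (c * q ^ n) k‖ :=
        fun k => qp_norm_ge_half q (c * q ^ n) hqn hcn k
      have hbk : ∀ k, ‖f n (k + 1)‖ ≤ K * r * ‖q‖ ^ n * r ^ k := by
        intro k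
        calc ‖f n (k + 1)‖
            ≤ K * ‖c * q ^ n / (a * b)‖ ^ (k + 1) :=
              f_norm_bound q a b (c * q ^ n) hqn δc δq' (Real.exp_pos _) (Real.exp_pos _)
                hlow hδq (k + 1)
          _ ≤ K * r * ‖q‖ ^ n * r ^ k := by
              rw [hrn_eq n, pow_succ]
              have h1 : (r * ‖q‖ ^ n) ^ k ≤ r ^ k := by
                apply pow_le_pow_left₀ (by positivity)
                have h2 : ‖q‖ ^ n ≤ 1 := pow_le_one₀ hq0' hqn.le
                nlinarith
              have h2 : (0:ℝ) ≤ r * ‖q‖ ^ n := by positivity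
              calc K * ((r * ‖q‖ ^ n) ^ k * (r * ‖q‖ ^ n))
                  ≤ K * (r ^ k * (r * ‖q‖ ^ n)) := by
                    apply mul_le_mul_of_nonneg_left _ hKpos.le
                    exact mul_le_mul_of_nonneg_right h1 h2
                _ = K * r * ‖q‖ ^ n * r ^ k := by ring
      have hFn : F n - 1 = ∑' k, f n (k + 1) := by
        rw [hF]
        simp only
        rw [Summable.tsum_eq_zero_add (hfs n)]
        have h0 : f n 0 = 1 := by simp [hf, qp_zero]
        rw [h0]
        ring
      rw [hFn]
      have hs1 : Summable fun k => ‖f n (k + 1)‖ := (summable_nat_add_iff 1).2 (hfsn n)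
      calc ‖∑' k, f n (k + 1)‖ ≤ ∑' k, ‖f n (k + 1)‖ := norm_tsum_le_tsum_norm hs1
        _ ≤ ∑' k : ℕ, K * r * ‖q‖ ^ n * r ^ k :=
            Summable.tsum_le_tsum hbk hs1 ((summable_geometric_of_lt_one hr0 hrn).mul_left _)
        _ = K * r * ‖q‖ ^ n * (1 - r)⁻¹ := by
            rw [tsum_mul_left, tsum_geometric_of_lt_one hr0 hrn]
        _ = K * r * (1 - r)⁻¹ * ‖q‖ ^ n := by ring
    have h0 : Filter.Tendsto (fun n : ℕ => K * r * (1 - r)⁻¹ * ‖q‖ ^ n)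
        Filter.atTop (nhds 0) := by
      have h := (tendsto_pow_atTop_nhds_zero_of_lt_one hq0' hqn).const_mul (K * r * (1 - r)⁻¹)
      rwa [mul_zero] at h
    have hsq : Filter.Tendsto (fun n => ‖F n - 1‖) Filter.atTop (nhds 0) :=
      squeeze_zero' (Filter.Eventually.of_forall (fun n => norm_nonneg _))
        (Filter.eventually_atTop.2 ⟨N0, hbound⟩) h0
    have hsub : Filter.Tendsto (fun n => F n - 1) Filter.atTop (nhds 0) := by
      rwa [tendsto_zero_iff_norm_tendsto_zero]
    have := hsub.add (tendsto_const_nhds (x := (1:ℂ)))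
    simpa using this
  -- assemble
  have hPlim : Filter.Tendsto (fun N => qp q (c / a) N * qp q (c / b) N
        / (qp q c N * qp q (c / (a * b)) N) * F N) Filter.atTop
      (nhds (qpi q (c / a) * qpi q (c / b) / (qpi q c * qpi q (c / (a * b))) * 1)) :=
    Filter.Tendsto.mul
      (Filter.Tendsto.div
        ((tendsto_qp_qpi q (c / a) hqn).mul (tendsto_qp_qpi q (c / b) hqn))
        ((tendsto_qp_qpi q c hqn).mul (tendsto_qp_qpi q (c / (a * b)) hqn))
        (mul_ne_zero hdeninf.1 hdeninf.2))
      hFlim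
  have hEq : F 0 = qpi q (c / a) * qpi q (c / b) / (qpi q c * qpi q (c / (a * b))) * 1 := by
    apply tendsto_nhds_unique _ hPlim
    apply Filter.Tendsto.congr _ (tendsto_const_nhds (x := F 0))
    intro N
    rw [← hprod N, ← hiter N]
  have hgoal : (∑' k : ℕ, qp q a k * qp q b k / (qp q c k * qp q q k) * (c / (a * b)) ^ k)
      = F 0 := by
    rw [hF]
    apply tsum_congr
    intro k
    simp only [hf, pow_zero, mul_one]
  rw [hgoal, hEq, mul_one]
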